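/- Let I be a monomial ideal of R = K[x_1,…,x_n], let m = (x_1,…,x_n), and let y_1,…,y_s be distinct variables of R such that for each i = 1,…,s there exist an integer α_i ≥ 1 and a monomial ideal J_i of R with y_i ∉ supp(J_i), I + (y_i^{α_i}) = J_i + (y_i^{α_i}), and m∖y_i ∉ Ass(R/J_i). If ∏_{i=1}^s y_i^{α_i} ∈ I, then m ∉ Ass(R/I). -/

import Mathlib

open MvPolynomial

/-- `I` is an ideal of `K[x_1,…,x_n]` generated by monomials. -/
def IsMonomialIdeal {K : Type*} [Field K] {n : ℕ}
    (I : Ideal (MvPolynomial (Fin n) K)) : Prop :=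
  ∃ S : Set (Fin n →₀ ℕ),
    I = Ideal.span ((fun e => MvPolynomial.monomial e (1 : K)) '' S)

/-- `I` is a monomial ideal admitting a monomial generating set in which no
monomial is divisible by a variable `x_i` with `i ∈ A`; equivalently, `I` is a
monomial ideal whose support is disjoint from `A`. -/
def MonomialIdealAvoiding {K : Type*} [Field K] {n : ℕ} (A : Set (Fin n))
    (I : Ideal (MvPolynomial (Fin n) K)) : Prop :=
  ∃ S : Set (Fin n →₀ ℕ), (∀ e ∈ S, ∀ i ∈ A, e i = 0) ∧
    I = Ideal.span ((fun e => MvPolynomial.monomial e (1 : K)) '' S)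

section Aux

variable {K : Type*} [Field K] {n : ℕ}

local notation "R" => MvPolynomial (Fin n) K

lemma mem_span_mon {S : Set (Fin n →₀ ℕ)} {f : R} :
    f ∈ Ideal.span ((fun e => monomial e (1 : K)) '' S) ↔
      ∀ e ∈ f.support, ∃ g ∈ S, g ≤ e :=
  MvPolynomial.mem_ideal_span_monomial_image

lemma mon_mem_span_mon {S : Set (Fin n →₀ ℕ)} {e : Fin n →₀ ℕ} :
    (monomial e (1 : K)) ∈ Ideal.span ((fun e => monomial e (1 : K)) '' S) ↔
      ∃ g ∈ S, g ≤ e := by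
  classical
  rw [mem_span_mon, support_monomial, if_neg (one_ne_zero' K)]
  simp

lemma mem_ann_iff (I : Ideal R) (f r : R) :
    r ∈ (⊥ : Submodule R (R ⧸ I)).colon {(Ideal.Quotient.mk I f)} ↔ r * f ∈ I := by
  rw [Submodule.mem_colon_singleton, Submodule.mem_bot]
  have : r • (Ideal.Quotient.mk I f) = Ideal.Quotient.mk I (r * f) := rfl
  rw [this, Ideal.Quotient.eq_zero_iff_mem]

/-- Maximality of `span (range X)`. -/
lemma eq_span_X_of_le (Q : Ideal R) (hQ : Q ≠ ⊤)
    (h : Ideal.span (Set.range (X : Fin n → R)) ≤ Q) :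
    Q = Ideal.span (Set.range (X : Fin n → R)) := by
  refine le_antisymm ?_ h
  intro f hf
  set c : K := coeff 0 f with hc
  have hsub : f - C c ∈ Ideal.span (Set.range (X : Fin n → R)) := by
    rw [← Set.image_univ, mem_ideal_span_X_image]
    intro e he
    by_contra hcon
    push_neg at hcon
    have he0 : e = 0 := Finsupp.ext fun i => by simpa using hcon i (Set.mem_univ i)
    rw [he0, mem_support_iff] at he
    simp [coeff_sub, hc] at he
  have hCc : C c ∈ Q := by
    have : C c = f - (f - C c) := by ring
    rw [this]
    exact Q.sub_mem hf (h hsub)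
  have hc0 : c = 0 := by
    by_contra hne
    apply hQ
    rw [Ideal.eq_top_iff_one]
    have := Q.mul_mem_left (C c⁻¹) hCc
    rwa [← map_mul, inv_mul_cancel₀ hne, map_one] at this
  rw [hc0, map_zero, sub_zero] at hsub
  exact hsub

/-- Forward direction: extract a monomial witness from an associated maximal prime. -/
lemma exists_witness {S : Set (Fin n →₀ ℕ)}
    (hm : Ideal.span (Set.range (X : Fin n → R)) ∈
      associatedPrimes R (R ⧸ Ideal.span ((fun e => monomial e (1 : K)) '' S))) :
    ∃ e : Fin n →₀ ℕ, (∀ g ∈ S, ¬ g ≤ e) ∧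
      ∀ j, ∃ g ∈ S, g ≤ e + Finsupp.single j 1 := by
  classical
  obtain ⟨hp, x, hx⟩ := isAssociatedPrime_iff.1 (AssociatedPrimes.mem_iff.1 hm)
  obtain ⟨f, rfl⟩ := Ideal.Quotient.mk_surjective x
  set I := Ideal.span ((fun e => monomial e (1 : K)) '' S) with hI
  have key : ∀ r : R, r ∈ Ideal.span (Set.range (X : Fin n → R)) ↔ r * f ∈ I := by
    intro r
    rw [hx, mem_ann_iff]
  have hfI : f ∉ I := by
    have h1 : (1 : R) ∉ Ideal.span (Set.range (X : Fin n → R)) := by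
      intro h
      exact hp.ne_top (Ideal.eq_top_iff_one _ |>.2 h)
    intro hf
    exact h1 ((key 1).2 (by rwa [one_mul]))
  rw [hI, mem_span_mon] at hfI
  push_neg at hfI
  obtain ⟨e, he, he1⟩ := hfI
  refine ⟨e, he1, fun j => ?_⟩
  have hXj : X j * f ∈ I := by
    rw [← key (X j)]
    exact Ideal.subset_span ⟨j, rfl⟩
  rw [hI, mem_span_mon] at hXj
  apply hXj
  rw [mem_support_iff, mul_comm, coeff_mul_X]
  exact mem_support_iff.mp he

/-- Backward direction: a monomial witness gives an associated maximal prime. -/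
lemma mem_ass_of_witness {S : Set (Fin n →₀ ℕ)}
    (hp : (Ideal.span (Set.range (X : Fin n → R))).IsPrime) {e : Fin n →₀ ℕ}
    (h1 : ∀ g ∈ S, ¬ g ≤ e) (h2 : ∀ j, ∃ g ∈ S, g ≤ e + Finsupp.single j 1) :
    Ideal.span (Set.range (X : Fin n → R)) ∈
      associatedPrimes R (R ⧸ Ideal.span ((fun e => monomial e (1 : K)) '' S)) := by
  classical
  set I := Ideal.span ((fun e => monomial e (1 : K)) '' S) with hI
  refine AssociatedPrimes.mem_iff.2 (isAssociatedPrime_iff.2 ⟨hp, Ideal.Quotient.mk I (monomial e 1), ?_⟩)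
  set Q := (⊥ : Submodule R (R ⧸ I)).colon {(Ideal.Quotient.mk I (monomial e 1))} with hQdef
  have hQmem : ∀ r : R, r ∈ Q ↔ r * monomial e 1 ∈ I := fun r => mem_ann_iff I _ r
  have hQne : Q ≠ ⊤ := by
    intro h
    have : (1 : R) * monomial e 1 ∈ I := (hQmem 1).1 (h ▸ Submodule.mem_top)
    rw [one_mul, hI, mon_mem_span_mon] at this
    obtain ⟨g, hg, hge⟩ := this
    exact h1 g hg hge
  have hle : Ideal.span (Set.range (X : Fin n → R)) ≤ Q := by
    rw [Ideal.span_le]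
    rintro _ ⟨j, rfl⟩
    rw [SetLike.mem_coe, hQmem]
    have : (X j : R) * monomial e 1 = monomial (e + Finsupp.single j 1) 1 := by
      rw [mul_comm, monomial_add_single, pow_one]
    rw [this, hI, mon_mem_span_mon]
    exact h2 j
  exact (eq_span_X_of_le Q hQne hle).symm

/-- The prime `m ∖ y` is prime. -/
lemma isPrime_span_X_compl (y : Fin n) :
    (Ideal.span ((X : Fin n → R) '' ({y}ᶜ))).IsPrime := by
  classical
  set g : Fin n → R := fun j => if j = y then X j else 0 with hg
  have hker : Ideal.span ((X : Fin n → R) '' ({y}ᶜ)) =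
      RingHom.ker (aeval g : R →ₐ[K] R) := by
    apply le_antisymm
    · rw [Ideal.span_le]
      rintro _ ⟨j, hj, rfl⟩
      have : (aeval g) (X j : R) = 0 := by
        rw [aeval_X, hg]
        simp only [if_neg (by simpa using hj)]
      simpa [RingHom.mem_ker] using this
    · intro f hf
      rw [RingHom.mem_ker] at hf
      rw [mem_ideal_span_X_image]
      intro u hu
      by_contra hcon
      push_neg at hcon
      have hu0 : ∀ k, k ≠ y → u k = 0 := fun k hk => hcon k (by simpa using hk)
      -- compute the coefficient of u in aeval g f
      have hterm : ∀ v ∈ f.support, coeff u ((aeval g) (monomial v (coeff v f))) =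
          if v = u then coeff v f else 0 := by
        intro v _
        rw [aeval_monomial]
        by_cases hvy : ∀ k ∈ v.support, k = y
        · have hprod : (v.prod fun i k => g i ^ k) = monomial v (1 : K) := by
            rw [Finsupp.prod, ← prod_X_pow_eq_monomial]
            refine Finset.prod_congr rfl (fun k hk => ?_)
            rw [hg]
            simp [hvy k hk]
          rw [hprod, MvPolynomial.algebraMap_eq, C_mul_monomial, mul_one, coeff_monomial]
        · push_neg at hvy
          obtain ⟨k, hk, hky⟩ := hvy
          have hzero : (v.prod fun i k => g i ^ k) = 0 := by
            rw [Finsupp.prod]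
            apply Finset.prod_eq_zero hk
            rw [hg]
            simp [if_neg hky, zero_pow (Finsupp.mem_support_iff.mp hk)]
          have hvu : v ≠ u := by
            intro h
            subst h
            exact (Finsupp.mem_support_iff.mp hk) (hu0 k hky)
          rw [hzero, mul_zero, coeff_zero, if_neg hvu]
      have hcoeff : coeff u ((aeval g) f) = coeff u f := by
        conv_lhs => rw [f.as_sum]
        rw [map_sum, MvPolynomial.coeff_sum, Finset.sum_congr rfl hterm,
          Finset.sum_ite_eq' f.support u (fun v => coeff v f), if_pos hu]
      rw [hf] at hcoeff
      simp only [coeff_zero] at hcoeff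
      exact mem_support_iff.mp hu hcoeff.symm
  rw [hker]
  exact RingHom.ker_isPrime _

/-- Splitting off a pure power of a variable not occurring in `T`. -/
lemma shift_lemma {T : Set (Fin n →₀ ℕ)} {y : Fin n} {a : ℕ}
    (hT : ∀ g ∈ T, g y = 0)
    (hass : Ideal.span ((X : Fin n → R) '' ({y}ᶜ)) ∉
      associatedPrimes R (R ⧸ Ideal.span ((fun e => monomial e (1 : K)) '' T))) :
    Ideal.span (Set.range (X : Fin n → R)) ∉
      associatedPrimes R
        (R ⧸ Ideal.span ((fun e => monomial e (1 : K)) ''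
          (insert (Finsupp.single y a) T))) := by
  classical
  intro hm
  obtain ⟨e, h1, h2⟩ := exists_witness hm
  set J := Ideal.span ((fun e => monomial e (1 : K)) '' T) with hJ
  set d : Fin n →₀ ℕ := Finsupp.erase y e with hd
  have hdle : d ≤ e := by
    intro k
    rw [hd, Finsupp.erase_apply]
    split <;> simp
  have hdy : d y = 0 := by simp [hd]
  have hdk : ∀ k, k ≠ y → d k = e k := by
    intro k hk
    simp [hd, Finsupp.erase_apply, hk]
  have hd_not : ∀ g ∈ T, ¬ g ≤ d := by
    intro g hg hgd
    exact h1 g (Set.mem_insert_of_mem _ hg) (hgd.trans hdle)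
  have hstep : ∀ j, j ≠ y → ∃ g ∈ T, g ≤ d + Finsupp.single j 1 := by
    intro j hj
    obtain ⟨g, hg, hge⟩ := h2 j
    rcases Set.mem_insert_iff.mp hg with hgy | hgT
    · exfalso
      apply h1 _ (Set.mem_insert _ _)
      rw [Finsupp.single_le_iff]
      have := hge y
      rw [hgy] at this
      simpa [Finsupp.single_apply, if_neg hj] using this
    · refine ⟨g, hgT, fun k => ?_⟩
      by_cases hk : k = y
      · subst hk
        simp [hT g hgT, hdy]
      · have := hge k
        simpa [hdk k hk] using this
  apply hass
  refine AssociatedPrimes.mem_iff.2 (isAssociatedPrime_iff.2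
    ⟨isPrime_span_X_compl y, Ideal.Quotient.mk J (monomial d 1), ?_⟩)
  apply le_antisymm
  · rw [Ideal.span_le]
    rintro _ ⟨j, hj, rfl⟩
    have hj' : j ≠ y := by simpa using hj
    rw [SetLike.mem_coe, mem_ann_iff]
    have : (X j : R) * monomial d 1 = monomial (d + Finsupp.single j 1) 1 := by
      rw [mul_comm, monomial_add_single, pow_one]
    rw [this, hJ, mon_mem_span_mon]
    exact hstep j hj'
  · intro r hr
    rw [mem_ann_iff, hJ, mem_span_mon] at hr
    rw [mem_ideal_span_X_image]
    intro u hu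
    by_contra hcon
    push_neg at hcon
    have hu0 : ∀ k, k ≠ y → u k = 0 := fun k hk => hcon k (by simpa using hk)
    have hud : u + d ∈ (r * monomial d 1).support := by
      rw [mem_support_iff, coeff_mul_monomial, mul_one]
      exact mem_support_iff.mp hu
    obtain ⟨g, hg, hgle⟩ := hr _ hud
    apply hd_not g hg
    intro k
    by_cases hk : k = y
    · subst hk
      simpa [hT g hg] using Nat.zero_le _
    · have := hgle k
      simpa [hu0 k hk] using this

lemma prod_mon {s : ℕ} (g : Fin s → (Fin n →₀ ℕ)) (t : Finset (Fin s)) :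
    ∏ i ∈ t, (monomial (g i) (1 : K)) = monomial (∑ i ∈ t, g i) 1 := by
  classical
  induction t using Finset.induction with
  | empty => simp
  | insert a t h ih =>
    rw [Finset.prod_insert h, Finset.sum_insert h, ih, monomial_mul, one_mul]

end Aux

/-- Let `I` be a monomial ideal of `R = K[x_1,…,x_n]`,
`m = (x_1,…,x_n)`, and let `y_1,…,y_s` be distinct variables such that for
each `i` there are `α_i ≥ 1` and a monomial ideal `J_i` with
`y_i ∉ supp J_i`, `I + (y_i^{α_i}) = J_i + (y_i^{α_i})` and
`m ∖ y_i ∉ Ass (R / J_i)`.  If `∏ y_i^{α_i} ∈ I`, then `m ∉ Ass (R / I)`. -/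
theorem maximal_not_associated_of_prod_mem
    {K : Type*} [Field K] {n s : ℕ}
    (I : Ideal (MvPolynomial (Fin n) K)) (hI : IsMonomialIdeal I)
    (y : Fin s → Fin n) (hy : Function.Injective y)
    (α : Fin s → ℕ) (hα : ∀ i, 1 ≤ α i)
    (J : Fin s → Ideal (MvPolynomial (Fin n) K))
    (hJ : ∀ i, MonomialIdealAvoiding {y i} (J i))
    (hIJ : ∀ i, I + Ideal.span {(X (y i) : MvPolynomial (Fin n) K) ^ α i}
        = J i + Ideal.span {(X (y i) : MvPolynomial (Fin n) K) ^ α i})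
    (hass : ∀ i,
      Ideal.span ((X : Fin n → MvPolynomial (Fin n) K) '' ({y i}ᶜ)) ∉
        associatedPrimes (MvPolynomial (Fin n) K)
          (MvPolynomial (Fin n) K ⧸ J i))
    (hprod : (∏ i, (X (y i) : MvPolynomial (Fin n) K) ^ α i) ∈ I) :
    Ideal.span (Set.range (X : Fin n → MvPolynomial (Fin n) K)) ∉
      associatedPrimes (MvPolynomial (Fin n) K)
        (MvPolynomial (Fin n) K ⧸ I) := by
  classical
  obtain ⟨S, rfl⟩ := hI
  intro hm
  have hp := hm.1
  obtain ⟨e₀, he1, he2⟩ := exists_witness hm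
  by_cases hcase : ∀ i, α i ≤ e₀ (y i)
  · -- then the witness monomial lies in `I`, contradiction
    set c : Fin n →₀ ℕ := ∑ i, Finsupp.single (y i) (α i) with hc
    have hprodmon : (∏ i, (X (y i) : MvPolynomial (Fin n) K) ^ α i) = monomial c 1 := by
      simp_rw [X_pow_eq_monomial]
      exact prod_mon _ _
    have hce : c ≤ e₀ := by
      intro k
      have hck : c k = ∑ i, (Finsupp.single (y i) (α i)) k := by
        rw [hc, Finsupp.finset_sum_apply]
      rw [hck]
      by_cases hk : ∃ j, y j = k
      · obtain ⟨j, rfl⟩ := hk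
        have hsum : ∑ i, (Finsupp.single (y i) (α i)) (y j) = α j := by
          rw [Finset.sum_eq_single j]
          · simp
          · intro b _ hb
            rw [Finsupp.single_apply, if_neg (fun h => hb (hy h))]
          · simp
        rw [hsum]
        exact hcase j
      · have hall : ∀ i, (Finsupp.single (y i) (α i)) k = 0 := by
          intro i
          rw [Finsupp.single_apply, if_neg (fun h => hk ⟨i, h⟩)]
        simp [hall]
    have hmem : monomial e₀ (1 : K) ∈
        Ideal.span ((fun e => monomial e (1 : K)) '' S) := by
      have heq : monomial e₀ (1 : K) =
          (∏ i, (X (y i) : MvPolynomial (Fin n) K) ^ α i) * monomial (e₀ - c) 1 := by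
        rw [hprodmon, monomial_mul, one_mul, add_tsub_cancel_of_le hce]
      rw [heq]
      exact Ideal.mul_mem_right _ _ hprod
    rw [mon_mem_span_mon] at hmem
    obtain ⟨g, hg, hge⟩ := hmem
    exact he1 g hg hge
  · push_neg at hcase
    obtain ⟨i, hi⟩ := hcase
    obtain ⟨T, hT, hTJ⟩ := hJ i
    have hT' : ∀ g ∈ T, g (y i) = 0 := fun g hg => hT g hg (y i) rfl
    have key : ∀ U : Set (Fin n →₀ ℕ),
        Ideal.span ((fun e => monomial e (1 : K)) '' U) +
            Ideal.span {(X (y i) : MvPolynomial (Fin n) K) ^ α i}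
          = Ideal.span ((fun e => monomial e (1 : K)) ''
              (insert (Finsupp.single (y i) (α i)) U)) := by
      intro U
      rw [Set.image_insert_eq, Ideal.span_insert, X_pow_eq_monomial, sup_comm]
      rfl
    have heq : Ideal.span ((fun e => monomial e (1 : K)) ''
          (insert (Finsupp.single (y i) (α i)) S))
        = Ideal.span ((fun e => monomial e (1 : K)) ''
          (insert (Finsupp.single (y i) (α i)) T)) := by
      rw [← key S, ← key T, ← hTJ]
      exact hIJ i
    have hass' : Ideal.span ((X : Fin n → MvPolynomial (Fin n) K) '' ({y i}ᶜ)) ∉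
        associatedPrimes (MvPolynomial (Fin n) K)
          (MvPolynomial (Fin n) K ⧸ Ideal.span ((fun e => monomial e (1 : K)) '' T)) := by
      rw [← hTJ]
      exact hass i
    apply shift_lemma hT' hass'
    rw [← heq]
    apply mem_ass_of_witness hp
    · rintro g hg hge
      rcases Set.mem_insert_iff.mp hg with hgy | hgT
      · subst hgy
        rw [Finsupp.single_le_iff] at hge
        exact absurd hge (not_le.mpr hi)
      · exact he1 g hgT hge
    · intro j
      obtain ⟨g, hg, hge⟩ := he2 j
      exact ⟨g, Set.mem_insert_of_mem _ hg, hge⟩
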